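/- The improper integral ∫₀¹ ξ·exp(ψ(ξ)) dξ converges and equals λ²·β exactly. That is, the quantity G₂ computed from the explicit large-β profile equals λ²β. -/

import Mathlib

open Real Set Filter MeasureTheory

/-- The paper's large-β approximate profile
`ψ(ξ) = 2 log(cosech(arcoth((β+2)/2) - log ξ)) - log(ξ²/(2λ²))`,
written with `a = (1/2)·log((β+4)/β) = arcoth((β+2)/2)`. -/
noncomputable def psiL (lam β ξ : ℝ) : ℝ :=
  -2 * Real.log (Real.sinh ((1/2) * Real.log ((β + 4) / β) - Real.log ξ)) +
    Real.log (2 * lam ^ 2) - 2 * Real.log ξ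

lemma exp_neg_two_log {x : ℝ} (hx : 0 < x) : Real.exp (-2 * Real.log x) = (x ^ 2)⁻¹ := by
  rw [show (-2 : ℝ) * Real.log x = -(Real.log x + Real.log x) by ring, Real.exp_neg,
    Real.exp_add, Real.exp_log hx]
  ring

lemma psiL_key (lam β ξ : ℝ) (hlam : 0 < lam) (hβ : 0 < β) (hξ : ξ ∈ Set.Ioo (0:ℝ) 1) :
    ξ * Real.exp (psiL lam β ξ)
      = 8 * lam ^ 2 * ((β + 4) / β) * ξ / ((β + 4) / β - ξ ^ 2) ^ 2 := by
  obtain ⟨hξ0, hξ1⟩ := hξ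
  set c : ℝ := (β + 4) / β with hc_def
  have hc : 1 < c := (one_lt_div hβ).2 (by linarith)
  set E : ℝ := Real.exp ((1/2) * Real.log c) with hE_def
  have hEpos : 0 < E := Real.exp_pos _
  have hE2 : E ^ 2 = c := by
    rw [hE_def, ← Real.exp_nat_mul]
    rw [show ((2:ℕ):ℝ) * ((1/2) * Real.log c) = Real.log c by push_cast; ring,
      Real.exp_log (by linarith)]
  have hE1 : 1 < E := by nlinarith
  have hs : Real.sinh ((1/2) * Real.log c - Real.log ξ) = (E / ξ - ξ / E) / 2 := by
    rw [Real.sinh_eq, Real.exp_neg, Real.exp_sub, Real.exp_log hξ0, ← hE_def, inv_div]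
  have hspos : 0 < (E / ξ - ξ / E) / 2 := by
    have h1 : ξ / E < 1 := (div_lt_one hEpos).2 (by linarith)
    have h2 : 1 < E / ξ := (one_lt_div hξ0).2 (by linarith)
    linarith
  have hne : E ^ 2 - ξ ^ 2 ≠ 0 := by nlinarith
  rw [psiL, hs]
  rw [show -2 * Real.log ((E / ξ - ξ / E) / 2) + Real.log (2 * lam ^ 2) - 2 * Real.log ξ
      = (-2 * Real.log ((E / ξ - ξ / E) / 2)) + Real.log (2 * lam ^ 2) + (-2 * Real.log ξ)
      by ring]
  have hss : ((E / ξ - ξ / E) / 2) ^ 2 = (E ^ 2 - ξ ^ 2) ^ 2 / (4 * ξ ^ 2 * E ^ 2) := by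
    field_simp
    ring
  rw [Real.exp_add, Real.exp_add, exp_neg_two_log hspos, exp_neg_two_log hξ0,
    Real.exp_log (by positivity : (0:ℝ) < 2 * lam ^ 2), hss, ← hE2]
  field_simp
  ring

theorem stmt_4 (lam β : ℝ) (hlam : 0 < lam) (hβ : 0 < β) :
    IntegrableOn (fun ξ => ξ * Real.exp (psiL lam β ξ)) (Set.Ioo 0 1) ∧
    (∫ ξ in Set.Ioo (0:ℝ) 1, ξ * Real.exp (psiL lam β ξ)) = lam ^ 2 * β := by
  set c : ℝ := (β + 4) / β with hc_def
  have hc : 1 < c := (one_lt_div hβ).2 (by linarith)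
  set g : ℝ → ℝ := fun ξ => 8 * lam ^ 2 * c * ξ / (c - ξ ^ 2) ^ 2 with hg_def
  have hden : ∀ x ∈ Set.Icc (0:ℝ) 1, c - x ^ 2 ≠ 0 := by
    intro x hx
    have : x ^ 2 ≤ 1 := pow_le_one₀ hx.1 hx.2
    nlinarith
  have hcont : ContinuousOn g (Set.Icc 0 1) := by
    apply ContinuousOn.div (by fun_prop) (by fun_prop)
    intro x hx
    exact pow_ne_zero _ (hden x hx)
  have hgint : IntegrableOn g (Set.Ioo 0 1) :=
    (hcont.integrableOn_Icc).mono_set Set.Ioo_subset_Icc_self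
  have heq : Set.EqOn (fun ξ => ξ * Real.exp (psiL lam β ξ)) g (Set.Ioo 0 1) :=
    fun ξ hξ => psiL_key lam β ξ hlam hβ hξ
  constructor
  · exact hgint.congr_fun heq.symm measurableSet_Ioo
  · rw [MeasureTheory.setIntegral_congr_fun measurableSet_Ioo heq]
    have h1 : (∫ ξ in Set.Ioo (0:ℝ) 1, g ξ) = ∫ ξ in (0:ℝ)..1, g ξ := by
      rw [intervalIntegral.integral_of_le (by norm_num : (0:ℝ) ≤ 1),
        MeasureTheory.integral_Ioc_eq_integral_Ioo]
    rw [h1]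
    set F : ℝ → ℝ := fun ξ => 4 * lam ^ 2 * c * (c - ξ ^ 2)⁻¹ with hF_def
    have hderiv : ∀ x ∈ Set.uIcc (0:ℝ) 1, HasDerivAt F (g x) x := by
      intro x hx
      rw [Set.uIcc_of_le (by norm_num : (0:ℝ) ≤ 1)] at hx
      have h2 : HasDerivAt (fun ξ : ℝ => c - ξ ^ 2) (-(2 * x)) x := by
        simpa using (hasDerivAt_pow 2 x).const_sub c
      have h3 := (h2.inv (hden x hx)).const_mul (4 * lam ^ 2 * c)
      refine h3.congr_deriv ?_
      rw [hg_def]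
      ring
    have hint : IntervalIntegrable g MeasureTheory.volume 0 1 := by
      apply ContinuousOn.intervalIntegrable
      rwa [Set.uIcc_of_le (by norm_num : (0:ℝ) ≤ 1)]
    rw [intervalIntegral.integral_eq_sub_of_hasDerivAt hderiv hint]
    have hc0 : c ≠ 0 := by linarith
    have hc1 : c - 1 ≠ 0 := by linarith
    have hβ' : β ≠ 0 := ne_of_gt hβ
    have h10 : (c - 1 ^ 2) = 4 / β := by rw [hc_def]; field_simp; ring
    have h00 : (c - 0 ^ 2) = c := by ring
    rw [hF_def]
    simp only
    rw [h10, h00, hc_def]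
    field_simp
    ring
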